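/- Let f : ℝ^d → ℝ^d be the planar-flow transformation f(x)_i = x_i + γ_i · tanh(∑_j w_j x_j + b), where γ, w ∈ ℝ^d and b ∈ ℝ. If ∑_i γ_i w_i ≥ -1, then f is injective. -/

import Mathlib

lemma hasDerivAt_tanh' (x : ℝ) :
    HasDerivAt Real.tanh (1 / (Real.cosh x) ^ 2) x := by
  have h := (Real.hasDerivAt_sinh x).div (Real.hasDerivAt_cosh x)
    (ne_of_gt (Real.cosh_pos x))
  have heq : Real.tanh = fun y => Real.sinh y / Real.cosh y :=
    funext fun y => Real.tanh_eq_sinh_div_cosh y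
  rw [heq]
  refine h.congr_deriv ?_
  have hc := Real.cosh_sq_sub_sinh_sq x
  rw [div_eq_div_iff (by positivity) (by positivity)]
  nlinarith [hc]

lemma aux_strictMono (c b : ℝ) (hc : -1 ≤ c) :
    StrictMono (fun t : ℝ => t + c * Real.tanh (t + b)) := by
  set g : ℝ → ℝ := fun t => t + c * Real.tanh (t + b) with hg
  have hder : ∀ x : ℝ, HasDerivAt g (1 + c * (1 / (Real.cosh (x + b)) ^ 2)) x := by
    intro x
    have h1 : HasDerivAt (fun t : ℝ => t + b) 1 x := by
      simpa using (hasDerivAt_id x).add_const b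
    have h2 : HasDerivAt (fun t : ℝ => Real.tanh (t + b))
        (1 / (Real.cosh (x + b)) ^ 2 * 1) x :=
      by have := (hasDerivAt_tanh' (x + b)).comp x h1; exact this
    have h3 := (hasDerivAt_id x).add (h2.const_mul c)
    exact h3.congr_deriv (by ring)
  have hcont : Continuous g := by
    have : Differentiable ℝ g := fun x => (hder x).differentiableAt
    exact this.continuous
  have hpos : ∀ x : ℝ, x ≠ -b → 0 < 1 + c * (1 / (Real.cosh (x + b)) ^ 2) := by
    intro x hx
    have hne : x + b ≠ 0 := by
      intro h; apply hx; linarith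
    have h1 : 1 < Real.cosh (x + b) := Real.one_lt_cosh.mpr hne
    have hu0 : 0 < 1 / (Real.cosh (x + b)) ^ 2 := by positivity
    have hu1 : 1 / (Real.cosh (x + b)) ^ 2 < 1 := by
      rw [div_lt_one (by positivity)]
      nlinarith
    nlinarith [mul_nonneg (by linarith : (0:ℝ) ≤ c + 1) hu0.le]
  have H1 : StrictMonoOn g (Set.Iic (-b)) := by
    apply strictMonoOn_of_deriv_pos (convex_Iic _) (hcont.continuousOn)
    intro x hx
    rw [interior_Iic] at hx
    rw [(hder x).deriv]
    exact hpos x (ne_of_lt hx)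
  have H2 : StrictMonoOn g (Set.Ici (-b)) := by
    apply strictMonoOn_of_deriv_pos (convex_Ici _) (hcont.continuousOn)
    intro x hx
    rw [interior_Ici] at hx
    rw [(hder x).deriv]
    exact hpos x (ne_of_gt hx)
  intro a a' hlt
  rcases le_or_gt a' (-b) with h' | h'
  · exact H1 (Set.mem_Iic.mpr (hlt.le.trans h')) (Set.mem_Iic.mpr h') hlt
  · rcases le_or_gt (-b) a with h'' | h''
    · exact H2 (Set.mem_Ici.mpr h'') (Set.mem_Ici.mpr h'.le) hlt
    · calc g a < g (-b) := H1 (Set.mem_Iic.mpr h''.le) Set.self_mem_Iic h''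
        _ < g a' := H2 Set.self_mem_Ici (Set.mem_Ici.mpr h'.le) h'

/-- Invertibility of the planar flow with tanh nonlinearity when ∑ γᵢwᵢ ≥ -1. -/
theorem planar_flow_injective (d : ℕ) (γ w : Fin d → ℝ) (b : ℝ)
    (h : -1 ≤ ∑ i, γ i * w i) :
    Function.Injective (fun x : Fin d → ℝ =>
      fun i => x i + γ i * Real.tanh ((∑ j, w j * x j) + b)) := by
  intro x y hxy
  set C : ℝ := ∑ i, γ i * w i with hC
  set s : ℝ := ∑ j, w j * x j with hs
  set t : ℝ := ∑ j, w j * y j with ht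
  have hcomp : ∀ i, x i + γ i * Real.tanh (s + b) = y i + γ i * Real.tanh (t + b) :=
    fun i => congrFun hxy i
  have expand : ∀ (z : Fin d → ℝ) (T : ℝ),
      ∑ i, w i * (z i + γ i * T) = (∑ i, w i * z i) + C * T := by
    intro z T
    simp only [mul_add, Finset.sum_add_distrib]
    congr 1
    rw [hC, Finset.sum_mul]
    exact Finset.sum_congr rfl fun i _ => by ring
  have hsum : s + C * Real.tanh (s + b) = t + C * Real.tanh (t + b) := by
    rw [← expand x (Real.tanh (s + b)), ← expand y (Real.tanh (t + b))]
    exact Finset.sum_congr rfl fun i _ => by rw [hcomp i]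
  have hst : s = t := (aux_strictMono C b h).injective hsum
  funext i
  have := hcomp i
  rw [hst] at this
  linarith
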